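/- In the algebra U with generators a, x, y and relations xa = qax, ya = q^{-1}ay, yx - q^{-n₁}xy = β₃(a^{2n₁} - a^{mn(n₂+n₃)}) over a field K with q a primitive n-th root of unity, the element λ = (1/N) (∑_{i=0}^{N-1} a^i) x^{n-1} y^{n-1}, where N = n(n-1)m and a^N = 1, satisfies hλ = ε(h)λ = λh for all h in the Hopf algebra H_{α,β}; i.e., λ is a two-sided integral. Moreover ε(λ) = 0, so H_{α,β} is not semisimple. -/

import Mathlib

section aux
variable {K A : Type*} [Field K] [Ring A] [Algebra K A]

lemma comm_pow_left {x a : A} {q : K} (h : x * a = q • (a * x)) :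
    ∀ k, x ^ k * a = q ^ k • (a * x ^ k)
  | 0 => by simp
  | (k + 1) => by
    rw [pow_succ, mul_assoc, h, mul_smul_comm, ← mul_assoc, comm_pow_left h k,
      smul_mul_assoc, smul_smul, mul_assoc, ← pow_succ, ← pow_succ']

lemma comm_pow_right {x a : A} {q : K} (h : x * a = q • (a * x)) :
    ∀ e, x * a ^ e = q ^ e • (a ^ e * x)
  | 0 => by simp
  | (e + 1) => by
    rw [pow_succ, ← mul_assoc, comm_pow_right h e, smul_mul_assoc, mul_assoc, h,
      mul_smul_comm, smul_smul, ← mul_assoc, ← pow_succ]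

lemma comm_pow_pow {x a : A} {q : K} (h : x * a = q • (a * x)) (k e : ℕ) :
    x ^ k * a ^ e = (q ^ k) ^ e • (a ^ e * x ^ k) :=
  comm_pow_right (comm_pow_left h k) e

lemma gen_mul_sum {x a : A} {q : K} (h : x * a = q • (a * x)) (N : ℕ) :
    x * (∑ i ∈ Finset.range N, a ^ i) = (∑ i ∈ Finset.range N, q ^ i • a ^ i) * x := by
  rw [Finset.mul_sum, Finset.sum_mul]
  exact Finset.sum_congr rfl fun i _ => by rw [comm_pow_right h, smul_mul_assoc]

lemma Sq_mul_a {N : ℕ} (hN : N ≠ 0) {a : A} (haN : a ^ N = 1) {r : K} (hr : r ^ N = 1) :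
    r • ((∑ i ∈ Finset.range N, r ^ i • a ^ i) * a) = ∑ i ∈ Finset.range N, r ^ i • a ^ i := by
  have h1 : r • ((∑ i ∈ Finset.range N, r ^ i • a ^ i) * a)
      = ∑ i ∈ Finset.range N, r ^ (i + 1) • a ^ (i + 1) := by
    rw [Finset.sum_mul, Finset.smul_sum]
    exact Finset.sum_congr rfl fun i _ => by
      rw [smul_mul_assoc, ← pow_succ, smul_smul, ← pow_succ']
  obtain ⟨M, rfl⟩ : ∃ M, N = M + 1 := ⟨N - 1, by omega⟩
  rw [h1, Finset.sum_range_succ, Finset.sum_range_succ' (fun i => r ^ i • a ^ i) M,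
    haN, hr, one_smul, pow_zero, pow_zero, one_smul]

lemma Sq_mul_a' {N : ℕ} (hN : N ≠ 0) {a : A} (haN : a ^ N = 1) {r : K} (hr : r ^ N = 1)
    (hr0 : r ≠ 0) :
    (∑ i ∈ Finset.range N, r ^ i • a ^ i) * a = r⁻¹ • ∑ i ∈ Finset.range N, r ^ i • a ^ i := by
  have h := Sq_mul_a hN haN hr (a := a)
  calc (∑ i ∈ Finset.range N, r ^ i • a ^ i) * a
      = r⁻¹ • (r • ((∑ i ∈ Finset.range N, r ^ i • a ^ i) * a)) := by
        rw [smul_smul, inv_mul_cancel₀ hr0, one_smul]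
    _ = r⁻¹ • ∑ i ∈ Finset.range N, r ^ i • a ^ i := by rw [h]

lemma Sq_mul_pow {N : ℕ} (hN : N ≠ 0) {a : A} (haN : a ^ N = 1) {r : K} (hr : r ^ N = 1)
    (hr0 : r ≠ 0) :
    ∀ e, (∑ i ∈ Finset.range N, r ^ i • a ^ i) * a ^ e
      = (r⁻¹) ^ e • ∑ i ∈ Finset.range N, r ^ i • a ^ i
  | 0 => by simp
  | (e + 1) => by
    rw [pow_succ, ← mul_assoc, Sq_mul_pow hN haN hr hr0 e, smul_mul_assoc,
      Sq_mul_a' hN haN hr hr0, smul_smul, ← pow_succ]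

set_option linter.unreachableTactic false in
set_option linter.unusedTactic false in
lemma yx_pow (w c : K) (x y P Q : A)
    (hyx : y * x = w • (x * y) + c • (P - Q))
    (hPx : P * x = (w * w) • (x * P))
    (hQx : Q * x = x * Q) :
    ∀ k, y * x ^ (k + 1) = w ^ (k + 1) • (x ^ (k + 1) * y) +
      c • (x ^ k * ((w ^ k * ∑ j ∈ Finset.range (k + 1), w ^ j) • P -
        (∑ j ∈ Finset.range (k + 1), w ^ j) • Q)) := by
  intro k
  induction k with
  | zero => simpa using hyx
  | succ k ih =>
    have h1 : y * x ^ (k + 1 + 1) = (y * x ^ (k + 1)) * x := by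
      rw [pow_succ, ← mul_assoc]
    set t := ∑ j ∈ Finset.range (k + 1), w ^ j with ht
    have hsum : ∑ j ∈ Finset.range (k + 1 + 1), w ^ j = t + w ^ (k + 1) := by
      rw [Finset.sum_range_succ, ht]
    have hgeom : w * t + 1 = t + w ^ (k + 1) := by
      rw [ht, ← geom_sum_succ, Finset.sum_range_succ]
    rw [h1, ih, add_mul, smul_mul_assoc, mul_assoc, hyx,
      smul_mul_assoc, mul_assoc, sub_mul, smul_mul_assoc, smul_mul_assoc, hPx, hQx, hsum]
    simp only [mul_add, mul_sub, smul_add, smul_sub, smul_smul, mul_smul_comm,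
      smul_mul_assoc, ← mul_assoc, ← pow_succ]
    match_scalars <;>
      first
        | ring1
        | linear_combination (w ^ (k + 1) * c) * hgeom
        | linear_combination (-(w ^ (k + 1) * c)) * hgeom

set_option linter.unreachableTactic false in
set_option linter.unusedTactic false in
lemma xy_pow (w c : K) (x y P Q : A)
    (hyx : y * x = w • (x * y) + c • (P - Q))
    (hyP : y * P = (w * w) • (P * y))
    (hyQ : y * Q = Q * y) :
    ∀ k, y ^ (k + 1) * x = w ^ (k + 1) • (x * y ^ (k + 1)) +
      c • (((w ^ k * ∑ j ∈ Finset.range (k + 1), w ^ j) • P -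
        (∑ j ∈ Finset.range (k + 1), w ^ j) • Q) * y ^ k) := by
  intro k
  induction k with
  | zero => simpa using hyx
  | succ k ih =>
    have h1 : y ^ (k + 1 + 1) * x = y * (y ^ (k + 1) * x) := by
      rw [pow_succ', mul_assoc]
    set t := ∑ j ∈ Finset.range (k + 1), w ^ j with ht
    have hsum : ∑ j ∈ Finset.range (k + 1 + 1), w ^ j = t + w ^ (k + 1) := by
      rw [Finset.sum_range_succ, ht]
    have hgeom : w * t + 1 = t + w ^ (k + 1) := by
      rw [ht, ← geom_sum_succ, Finset.sum_range_succ]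
    rw [h1, ih, mul_add, mul_smul_comm, ← mul_assoc, hyx, mul_smul_comm, ← mul_assoc,
      mul_sub, mul_smul_comm, mul_smul_comm, hyP, hyQ, hsum]
    simp only [mul_add, add_mul, mul_sub, sub_mul, smul_add, smul_sub, smul_smul, mul_smul_comm,
      smul_mul_assoc, mul_assoc, ← pow_succ']
    match_scalars <;>
      first
        | ring1
        | linear_combination (w ^ (k + 1) * c) * hgeom
        | linear_combination (-(w ^ (k + 1) * c)) * hgeom

end aux

/-- `λ = (1/N)(∑ a^i) x^{n-1} y^{n-1}` is a two-sided integral of `H_{α,β}` with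
`ε(λ) = 0`, so `H_{α,β}` is not semisimple. -/
theorem stmt6 {K A : Type*} [Field K] [CharZero K] [Ring A] [Algebra K A]
    (n m n₁ n₂ n₃ : ℕ) (hn : 2 ≤ n) (hm : 1 ≤ m)
    (q : K) (hq : IsPrimitiveRoot q n)
    (β₁ β₂ β₃ : K) (a x y : A)
    (haN : a ^ (n * (n - 1) * m) = 1)
    (hxn : x ^ n = β₁ • (a ^ (n₁ * n) - a ^ (n * m * n₂)))
    (hyn : y ^ n = β₂ • (a ^ (n₁ * n) - a ^ (n₃ * m * n)))
    (hxa : x * a = q • (a * x)) (hya : y * a = q⁻¹ • (a * y))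
    (hyx : y * x - (q⁻¹) ^ n₁ • (x * y) = β₃ • (a ^ (2 * n₁) - a ^ (m * n * (n₂ + n₃))))
    (hgen : Algebra.adjoin K ({a, x, y} : Set A) = ⊤)
    (ε : A →ₐ[K] K) (hεa : ε a = 1) (hεx : ε x = 0) (hεy : ε y = 0) :
    let N : ℕ := n * (n - 1) * m
    let lam : A := ((N : K)⁻¹) • ((∑ i ∈ Finset.range N, a ^ i) * x ^ (n - 1) * y ^ (n - 1))
    (∀ h : A, h * lam = ε h • lam ∧ lam * h = ε h • lam) ∧
    ε lam = 0 ∧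
    (lam ≠ 0 → ¬ IsSemisimpleRing A) := by
  intro N lam
  -- numerics
  have hN0 : N ≠ 0 := Nat.mul_ne_zero (Nat.mul_ne_zero (by omega) (by omega)) (by omega)
  have hexp1 : n - 1 + 1 = n := by omega
  have hexp2 : n - 2 + 1 = n - 1 := by omega
  have hexp3 : n - 2 + 2 = n := by omega
  have hq0 : q ≠ 0 := hq.ne_zero (by omega)
  have hqn : q ^ n = 1 := hq.pow_eq_one
  have hqin : (q⁻¹) ^ n = 1 := by rw [inv_pow, hqn, inv_one]
  have haN' : a ^ N = 1 := haN
  have hqN : q ^ N = 1 := by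
    show q ^ (n * (n - 1) * m) = 1
    rw [mul_assoc, pow_mul, hqn, one_pow]
  have hqiN : (q⁻¹) ^ N = 1 := by rw [inv_pow, hqN, inv_one]
  have hqn1 : q ^ (n - 1) = q⁻¹ :=
    eq_inv_of_mul_eq_one_left (by rw [← pow_succ, hexp1, hqn])
  -- sums
  set S := ∑ i ∈ Finset.range N, a ^ i with hSdef
  set U := ∑ i ∈ Finset.range N, q ^ i • a ^ i with hUdef
  set T := ∑ i ∈ Finset.range N, (q⁻¹) ^ i • a ^ i with hTdef
  have hC : lam = ((N : K)⁻¹) • (S * x ^ (n - 1) * y ^ (n - 1)) := rfl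
  have hUa : ∀ e, U * a ^ e = (q⁻¹) ^ e • U := fun e => Sq_mul_pow hN0 haN' hqN hq0 e
  have hTa : ∀ e, T * a ^ e = q ^ e • T := by
    intro e
    have := Sq_mul_pow hN0 haN' hqiN (inv_ne_zero hq0) e
    rwa [inv_inv] at this
  have hSa : ∀ e, S * a ^ e = S := by
    intro e
    have := Sq_mul_pow (r := (1 : K)) hN0 haN' (one_pow N) one_ne_zero e
    simpa using this
  have hSa1 : S * a = S := by have := hSa 1; rwa [pow_one] at this
  have hxS : x * S = U * x := gen_mul_sum hxa N
  have hyS : y * S = T * y := gen_mul_sum hya N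
  -- w, P, Q
  set w := (q⁻¹) ^ n₁ with hwdef
  set P := a ^ (2 * n₁) with hPdef
  set Q := a ^ (m * n * (n₂ + n₃)) with hQdef
  have hww : w * w = (q⁻¹) ^ (2 * n₁) := by rw [hwdef, ← pow_add, two_mul]
  have hwn : w ^ n = 1 := by rw [hwdef, ← pow_mul, mul_comm, pow_mul, hqin, one_pow]
  have hyx' : y * x = w • (x * y) + β₃ • (P - Q) :=
    (eq_add_of_sub_eq hyx).trans (add_comm _ _)
  have hxP : x * P = q ^ (2 * n₁) • (P * x) := comm_pow_right hxa (2 * n₁)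
  have hPx : P * x = (w * w) • (x * P) := by
    rw [hxP, smul_smul, hww, ← mul_pow, inv_mul_cancel₀ hq0, one_pow, one_smul]
  have hqc : q ^ (m * n * (n₂ + n₃)) = 1 := by
    rw [show m * n * (n₂ + n₃) = n * (m * (n₂ + n₃)) by ring, pow_mul, hqn, one_pow]
  have hqic : (q⁻¹) ^ (m * n * (n₂ + n₃)) = 1 := by rw [inv_pow, hqc, inv_one]
  have hQx : Q * x = x * Q := by
    have := comm_pow_right hxa (m * n * (n₂ + n₃))
    rw [hqc, one_smul] at this
    exact this.symm
  have hyP : y * P = (w * w) • (P * y) := by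
    have := comm_pow_right hya (2 * n₁)
    rwa [← hww] at this
  have hyQ : y * Q = Q * y := by
    have := comm_pow_right hya (m * n * (n₂ + n₃))
    rwa [hqic, one_smul] at this
  -- exponent scalars
  have hqie1 : (q⁻¹) ^ (n₁ * n) = 1 := by rw [mul_comm, pow_mul, hqin, one_pow]
  have hqie2 : (q⁻¹) ^ (n * m * n₂) = 1 := by
    rw [show n * m * n₂ = n * (m * n₂) by ring, pow_mul, hqin, one_pow]
  have hqie3 : (q⁻¹) ^ (n₃ * m * n) = 1 := by
    rw [show n₃ * m * n = n * (n₃ * m) by ring, pow_mul, hqin, one_pow]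
  -- the key geometric scalar
  set t := ∑ j ∈ Finset.range (n - 1), w ^ j with htdef
  have sfact : (w ^ (n - 2) * t) * (w * w) = t := by
    have h2 : w ^ (n - 2) * (w * w) = 1 := by
      rw [← pow_two, ← pow_add, hexp3, hwn]
    calc (w ^ (n - 2) * t) * (w * w) = (w ^ (n - 2) * (w * w)) * t := by ring
      _ = t := by rw [h2, one_mul]
  -- general transport of a-powers past T * x^k and S * x^k
  have key1 : ∀ (k e : ℕ), T * x ^ k * a ^ e = ((q ^ k) ^ e * q ^ e) • (T * x ^ k) := by
    intro k e
    rw [mul_assoc, comm_pow_pow hxa k e, mul_smul_comm, ← mul_assoc, hTa e,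
      smul_mul_assoc, smul_smul]
  have key2 : ∀ (k e : ℕ), S * x ^ k * a ^ e = (q ^ k) ^ e • (S * x ^ k) := by
    intro k e
    rw [mul_assoc, comm_pow_pow hxa k e, mul_smul_comm, ← mul_assoc, hSa e]
  have hs1 : ∀ e, (q ^ (n - 1)) ^ e * q ^ e = 1 := by
    intro e
    rw [← mul_pow, ← pow_succ, hexp1, hqn, one_pow]
  have key1' : ∀ e, T * x ^ (n - 1) * a ^ e = T * x ^ (n - 1) := by
    intro e; rw [key1, hs1, one_smul]
  have hs2 : ∀ e, (q ^ (n - 2)) ^ e * q ^ e = (q⁻¹) ^ e := by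
    intro e
    rw [← mul_pow, ← pow_succ, hexp2, hqn1]
  have key1'' : ∀ e, T * x ^ (n - 2) * a ^ e = (q⁻¹) ^ e • (T * x ^ (n - 2)) := by
    intro e; rw [key1, hs2]
  have key2' : ∀ e, S * x ^ (n - 1) * a ^ e = (q⁻¹) ^ e • (S * x ^ (n - 1)) := by
    intro e; rw [key2, hqn1]
  -- core element
  set C := S * x ^ (n - 1) * y ^ (n - 1) with hCdef
  -- six core computations
  have haS : a * S = S * a := by
    rw [hSdef, Finset.mul_sum, Finset.sum_mul]
    exact Finset.sum_congr rfl fun i _ => by rw [← pow_succ', pow_succ]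
  have ca : a * C = C := by
    rw [hCdef, ← mul_assoc, ← mul_assoc, haS, hSa1]
  have hUxn : U * x ^ n = 0 := by
    rw [hxn, mul_smul_comm, mul_sub, hUa, hUa, hqie1, hqie2, one_smul,
      sub_self, smul_zero]
  have cx : x * C = 0 := by
    rw [hCdef, ← mul_assoc, ← mul_assoc, hxS, mul_assoc U x, ← pow_succ', hexp1,
      hUxn, zero_mul]
  have hSxn : S * x ^ n = 0 := by
    rw [hxn, mul_smul_comm, mul_sub, hSa, hSa, sub_self, smul_zero]
  have hTxyn : T * x ^ (n - 1) * y ^ n = 0 := by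
    rw [hyn, mul_smul_comm, mul_sub, key1', key1', sub_self, smul_zero]
  have hSxyn : S * x ^ (n - 1) * y ^ n = 0 := by
    rw [hyn, mul_smul_comm, mul_sub, key2', key2', hqie1, hqie3, one_smul,
      sub_self, smul_zero]
  have hTP : T * x ^ (n - 2) * P = (w * w) • (T * x ^ (n - 2)) := by
    rw [hPdef, key1'', ← hww]
  have hTQ : T * x ^ (n - 2) * Q = T * x ^ (n - 2) := by
    rw [hQdef, key1'', hqic, one_smul]
  have hT2 : T * x ^ (n - 2) * ((w ^ (n - 2) * t) • P - t • Q) = 0 := by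
    rw [mul_sub, mul_smul_comm, mul_smul_comm, hTP, hTQ, smul_smul, sfact, sub_self]
  have hSP : S * x ^ (n - 1) * P = (w * w) • (S * x ^ (n - 1)) := by
    rw [hPdef, key2', ← hww]
  have hSQ : S * x ^ (n - 1) * Q = S * x ^ (n - 1) := by
    rw [hQdef, key2', hqic, one_smul]
  have hS2 : S * x ^ (n - 1) * ((w ^ (n - 2) * t) • P - t • Q) = 0 := by
    rw [mul_sub, mul_smul_comm, mul_smul_comm, hSP, hSQ, smul_smul, sfact, sub_self]
  -- y * C = 0
  have hyX : y * x ^ (n - 1) = w ^ (n - 1) • (x ^ (n - 1) * y) +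
      β₃ • (x ^ (n - 2) * ((w ^ (n - 2) * t) • P - t • Q)) := by
    have h := yx_pow w β₃ x y P Q hyx' hPx hQx (n - 2)
    rwa [hexp2] at h
  have cy : y * C = 0 := by
    rw [hCdef, ← mul_assoc, ← mul_assoc, hyS, mul_assoc T y, hyX, mul_add, add_mul,
      mul_smul_comm, smul_mul_assoc, ← mul_assoc, mul_assoc (T * x ^ (n - 1)) y,
      ← pow_succ', hexp1, hTxyn, smul_zero, zero_add,
      mul_smul_comm, smul_mul_assoc, ← mul_assoc, hT2, zero_mul, smul_zero]
  -- C * a = C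
  have ra : C * a = C := by
    rw [hCdef, mul_assoc, comm_pow_left hya (n - 1), mul_smul_comm, ← mul_assoc,
      mul_assoc S, comm_pow_left hxa (n - 1), mul_smul_comm, smul_mul_assoc,
      smul_smul, ← mul_assoc, hSa1, ← mul_pow, inv_mul_cancel₀ hq0, one_pow, one_smul]
  -- C * x = 0
  have hYx : y ^ (n - 1) * x = w ^ (n - 1) • (x * y ^ (n - 1)) +
      β₃ • (((w ^ (n - 2) * t) • P - t • Q) * y ^ (n - 2)) := by
    have h := xy_pow w β₃ x y P Q hyx' hyP hyQ (n - 2)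
    rwa [hexp2] at h
  have rx : C * x = 0 := by
    rw [hCdef, mul_assoc, hYx, mul_add, mul_smul_comm, ← mul_assoc, mul_assoc S,
      ← pow_succ, hexp1, hSxn, zero_mul, smul_zero, zero_add,
      mul_smul_comm, ← mul_assoc, hS2, zero_mul, smul_zero]
  -- C * y = 0
  have ry : C * y = 0 := by
    rw [hCdef, mul_assoc, ← pow_succ, hexp1, hSxyn]
  -- lift to lam
  have la : a * lam = lam := by rw [hC, mul_smul_comm, ca]
  have lx : x * lam = 0 := by rw [hC, mul_smul_comm, cx, smul_zero]
  have ly : y * lam = 0 := by rw [hC, mul_smul_comm, cy, smul_zero]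
  have ra' : lam * a = lam := by rw [hC, smul_mul_assoc, ra]
  have rx' : lam * x = 0 := by rw [hC, smul_mul_assoc, rx, smul_zero]
  have ry' : lam * y = 0 := by rw [hC, smul_mul_assoc, ry, smul_zero]
  -- the integral property
  have key : ∀ h : A, h * lam = ε h • lam ∧ lam * h = ε h • lam := by
    intro h
    have hmem : h ∈ Algebra.adjoin K ({a, x, y} : Set A) := by
      rw [hgen]; trivial
    induction hmem using Algebra.adjoin_induction with
    | mem z hz =>
      simp only [Set.mem_insert_iff, Set.mem_singleton_iff] at hz
      rcases hz with rfl | rfl | rfl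
      · rw [hεa, one_smul]; exact ⟨la, ra'⟩
      · rw [hεx, zero_smul]; exact ⟨lx, rx'⟩
      · rw [hεy, zero_smul]; exact ⟨ly, ry'⟩
    | algebraMap r =>
      constructor
      · rw [AlgHom.commutes, ← Algebra.smul_def]
        simp
      · rw [AlgHom.commutes, ← Algebra.commutes, ← Algebra.smul_def]
        simp
    | add u v hu hv ihu ihv =>
      constructor
      · rw [add_mul, ihu.1, ihv.1, map_add, add_smul]
      · rw [mul_add, ihu.2, ihv.2, map_add, add_smul]
    | mul u v hu hv ihu ihv =>
      constructor
      · rw [mul_assoc, ihv.1, mul_smul_comm, ihu.1, smul_smul, map_mul, mul_comm (ε u)]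
      · rw [← mul_assoc, ihu.2, smul_mul_assoc, ihv.2, smul_smul, map_mul, mul_comm (ε u)]
  have h0 : (n - 1 : ℕ) ≠ 0 := by omega
  have hεC : ε C = 0 := by
    rw [hCdef, map_mul, map_mul, map_pow, hεx, zero_pow h0, mul_zero, zero_mul]
  have hεlam : ε lam = 0 := by
    rw [hC, map_smul, hεC, smul_zero]
  refine ⟨key, hεlam, ?_⟩
  · -- not semisimple
    intro hlne hss
    have : IsSemisimpleRing A := hss
    obtain ⟨J', hJ'⟩ := exists_isCompl (Submodule.span A {lam})
    have h1 : (1 : A) ∈ Submodule.span A {lam} ⊔ J' := by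
      rw [hJ'.sup_eq_top]; trivial
    obtain ⟨e, he, f, hf, hef⟩ := Submodule.mem_sup.mp h1
    have hεe : ε e = 0 := by
      obtain ⟨r, hr⟩ := Submodule.mem_span_singleton.mp he
      rw [← hr, smul_eq_mul, map_mul, hεlam, mul_zero]
    have hlamf : lam * f = lam := by
      have h2 : lam * e + lam * f = lam := by rw [← mul_add, hef, mul_one]
      have h3 : lam * e = 0 := by rw [(key e).2, hεe, zero_smul]
      rw [h3, zero_add] at h2
      exact h2
    have hmemJ' : lam ∈ J' := by
      rw [← hlamf]
      exact J'.smul_mem lam hf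
    have hmemJ : lam ∈ Submodule.span A {lam} := Submodule.mem_span_singleton_self lam
    have : lam ∈ (⊥ : Submodule A A) := by
      rw [← hJ'.inf_eq_bot]
      exact Submodule.mem_inf.mpr ⟨hmemJ, hmemJ'⟩
    exact hlne (Submodule.mem_bot A |>.mp this)
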